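/- Let z = \pi R / L. Then \pi (D + \hat V_{1,0}) = D\pi + R^2 \big( (\pi/2)(\ell/R) [J_1(z)H_0(z) - J_0(z)H_1(z)] - J_2(z) \big); in particular, the instability threshold condition D + \hat V_{1,0} = 0 holds if and only if D\pi + R^2( (\pi/2)(\ell/R)[J_1(z)H_0(z) - J_0(z)H_1(z)] - J_2(z) ) = 0. -/

import Mathlib

open Real MeasureTheory

/-- The 2D interaction potential: `V x = (|x| - ℓ)^2 - (R - ℓ)^2` for `|x| < R`, `0` otherwise,
where `|x| = √(x₁² + x₂²)` is the Euclidean norm. -/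
noncomputable def potV2 (R ℓ : ℝ) (x : ℝ × ℝ) : ℝ :=
  if Real.sqrt (x.1 ^ 2 + x.2 ^ 2) < R then
    (Real.sqrt (x.1 ^ 2 + x.2 ^ 2) - ℓ) ^ 2 - (R - ℓ) ^ 2
  else 0

/-- The `(k₁, k₂)`-th Fourier coefficient of `V` on the periodic square `[-L, L]²`.
It is a real number since `V` is real and radially symmetric. -/
noncomputable def Vhat2C (L R ℓ : ℝ) (k₁ k₂ : ℤ) : ℂ :=
  (1 / (2 * L)) ^ 2 *
    ∫ x in Set.Icc (-L) L ×ˢ Set.Icc (-L) L, (potV2 R ℓ x : ℂ) *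
      Complex.exp (-(Complex.I * (π : ℂ) * ((k₁ : ℂ) * (x.1 : ℂ) + (k₂ : ℂ) * (x.2 : ℂ)) /
        (L : ℂ)))

/-- The Bessel function of the first kind of order `i`. -/
noncomputable def besselJ (i : ℕ) (x : ℝ) : ℝ :=
  ∑' m : ℕ, ((-1 : ℝ) ^ m / (m.factorial * Real.Gamma (m + 1 + i))) * (x / 2) ^ (2 * m + i)

/-- The Struve function of order `i`. -/
noncomputable def struveH (i : ℕ) (x : ℝ) : ℝ :=
  ∑' m : ℕ, ((-1 : ℝ) ^ m / (Real.Gamma (m + 3 / 2) * Real.Gamma (m + i + 3 / 2))) *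
    (x / 2) ^ (2 * m + i + 1)


namespace ITH

lemma two_mul_add_three_le (m : ℕ) : (2 * (m : ℝ) + 3) ≤ 3 * 2 ^ m := by
  induction m with
  | zero => norm_num
  | succ n ih =>
    have h2 : (3 : ℝ) ≤ 3 * 2 ^ n := by
      have : (1 : ℝ) ≤ 2 ^ n := one_le_pow₀ (by norm_num)
      linarith
    push_cast
    rw [pow_succ]
    push_cast at ih
    nlinarith

lemma summable_core (A : ℝ) (hA : 0 ≤ A) :
    Summable (fun m : ℕ => (2 * (m : ℝ) + 3) / m.factorial * A ^ m) := by
  apply Summable.of_nonneg_of_le (fun m => by positivity) (fun m => ?_)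
    ((Real.summable_pow_div_factorial (2 * A)).mul_left 3)
  have h := two_mul_add_three_le m
  have hf : (0 : ℝ) < m.factorial := by positivity
  have hA' : (0:ℝ) ≤ A ^ m := by positivity
  calc (2 * (m:ℝ) + 3) / m.factorial * A ^ m = ((2 * (m:ℝ) + 3) * A ^ m) / m.factorial := by
        ring
    _ ≤ (3 * (2 ^ m * A ^ m)) / m.factorial := by
        gcongr ?_ / _
        nlinarith
    _ = 3 * ((2 * A) ^ m / m.factorial) := by rw [mul_pow]; ring

lemma term_le {c : ℕ → ℝ} (hc : ∀ m, |c m| ≤ 4 / m.factorial) {q : ℕ → ℕ}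
    (hq : ∀ m, q m ≤ 2 * m + 3) {y M : ℝ} (hM : 1 ≤ M) (hy : |y| ≤ M) (m : ℕ) :
    |c m * y ^ q m| ≤ 4 * M ^ 3 / m.factorial * (M ^ 2) ^ m := by
  have hf : (0 : ℝ) < m.factorial := by positivity
  have h1 : |y| ^ q m ≤ M ^ q m := pow_le_pow_left₀ (abs_nonneg y) hy _
  have h2 : M ^ q m ≤ M ^ (2 * m + 3) := pow_le_pow_right₀ hM (hq m)
  have h3 : M ^ (2 * m + 3) = (M ^ 2) ^ m * M ^ 3 := by ring
  rw [abs_mul, abs_pow]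
  calc |c m| * |y| ^ q m ≤ (4 / m.factorial) * ((M ^ 2) ^ m * M ^ 3) := by
        apply mul_le_mul (hc m) (h1.trans (h2.trans_eq h3)) (by positivity) (by positivity)
    _ = 4 * M ^ 3 / m.factorial * (M ^ 2) ^ m := by ring

lemma summable_series {c : ℕ → ℝ} {q : ℕ → ℕ} (hc : ∀ m, |c m| ≤ 4 / m.factorial)
    (hq : ∀ m, q m ≤ 2 * m + 3) (y : ℝ) : Summable fun m => c m * y ^ q m := by
  have hM : 1 ≤ max 1 |y| := le_max_left _ _
  have hy : |y| ≤ max 1 |y| := le_max_right _ _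
  apply Summable.of_abs
  apply Summable.of_nonneg_of_le (fun m => abs_nonneg _) (fun m => term_le hc hq hM hy m)
  exact ((Real.summable_pow_div_factorial ((max 1 |y|) ^ 2)).mul_left
    (4 * (max 1 |y|) ^ 3)).congr (fun m => by ring)

lemma hasDerivAt_series {c : ℕ → ℝ} {q : ℕ → ℕ} (hc : ∀ m, |c m| ≤ 4 / m.factorial)
    (hq : ∀ m, q m ≤ 2 * m + 3) (x : ℝ) :
    HasDerivAt (fun y : ℝ => ∑' m, c m * (y / 2) ^ q m)
      (∑' m, c m * q m * (x / 2) ^ (q m - 1) / 2) x := by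
  obtain ⟨M, hM, hx1, hx2⟩ : ∃ M : ℝ, 1 ≤ M ∧ -M < x ∧ x < M :=
    ⟨|x| + 1, by linarith [abs_nonneg x], by linarith [neg_abs_le x], by linarith [le_abs_self x]⟩
  have hxM : x ∈ Set.Ioo (-M) M := ⟨hx1, hx2⟩
  apply hasDerivAt_tsum_of_isPreconnected
    (u := fun m : ℕ => (2 * (m : ℝ) + 3) / m.factorial * (M ^ 2) ^ m * (2 * M ^ 2))
    (g' := fun m y => c m * q m * (y / 2) ^ (q m - 1) / 2)
    ((summable_core (M ^ 2) (by positivity)).mul_right _)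
    isOpen_Ioo isPreconnected_Ioo ?_ ?_ hxM ?_ hxM
  · intro n y _
    have h := (((hasDerivAt_id y).div_const 2).pow (q n)).const_mul (c n)
    refine h.congr_deriv ?_
    simp only [id_eq]
    ring
  · intro n y hy
    have hyM : |y / 2| ≤ M := by
      rw [abs_div]
      have : |y| ≤ M := abs_le.2 ⟨hy.1.le, hy.2.le⟩
      calc |y| / |(2:ℝ)| ≤ M / 1 := div_le_div₀ (by linarith) this (by norm_num) (by norm_num)
        _ = M := div_one M
    have h1 : |(y / 2) ^ (q n - 1)| ≤ (M ^ 2) ^ n * M ^ 2 := by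
      rw [abs_pow, ← pow_mul, ← pow_add]
      calc |y / 2| ^ (q n - 1) ≤ M ^ (q n - 1) := pow_le_pow_left₀ (abs_nonneg _) hyM _
        _ ≤ M ^ (2 * n + 2) := pow_le_pow_right₀ hM (by have := hq n; omega)
    have hq' : ((q n : ℕ) : ℝ) ≤ 2 * n + 3 := by exact_mod_cast hq n
    have hf : (0 : ℝ) < n.factorial := by positivity
    rw [Real.norm_eq_abs, abs_div, abs_mul, abs_mul, Nat.abs_cast]
    have hqn : (0:ℝ) ≤ ((q n : ℕ) : ℝ) := by positivity
    have key : |c n| * (q n : ℝ) * |(y / 2) ^ (q n - 1)| ≤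
        4 / n.factorial * (2 * n + 3) * ((M ^ 2) ^ n * M ^ 2) := by
      apply mul_le_mul (mul_le_mul (hc n) hq' hqn (by positivity)) h1 (abs_nonneg _)
        (by positivity)
    calc |c n| * (q n : ℝ) * |(y / 2) ^ (q n - 1)| / |(2:ℝ)|
        ≤ (4 / n.factorial * (2 * n + 3) * ((M ^ 2) ^ n * M ^ 2)) / |(2:ℝ)| := by
          gcongr
        _ = (2 * (n : ℝ) + 3) / n.factorial * (M ^ 2) ^ n * (2 * M ^ 2) := by
          rw [abs_two]
          field_simp
          ring
  · exact summable_series hc hq (x / 2)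

end ITH




noncomputable def gm (m : ℕ) : ℝ := Real.Gamma (m + 3 / 2)

lemma gm_pos (m : ℕ) : 0 < gm m := Real.Gamma_pos_of_pos (by positivity)

lemma gm_ne (m : ℕ) : gm m ≠ 0 := (gm_pos m).ne'

lemma gm_zero : gm 0 = √π / 2 := by
  unfold gm
  rw [show ((0:ℕ):ℝ) + 3 / 2 = 1 / 2 + 1 by norm_num,
    Real.Gamma_add_one (by norm_num), Real.Gamma_one_half_eq]
  ring

lemma gm_succ (m : ℕ) : gm (m + 1) = ((m : ℝ) + 3 / 2) * gm m := by
  unfold gm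
  rw [show ((m + 1 : ℕ) : ℝ) + 3 / 2 = ((m : ℝ) + 3 / 2) + 1 by push_cast; ring,
    Real.Gamma_add_one (by positivity)]

lemma gm_sq_ge (m : ℕ) : (m.factorial : ℝ) / 2 ≤ gm m ^ 2 := by
  induction m with
  | zero =>
    rw [gm_zero]
    rw [div_pow, sq_sqrt pi_pos.le]
    have := pi_gt_three
    norm_num
    linarith
  | succ n ih =>
    rw [gm_succ]
    have h1 : ((n + 1).factorial : ℝ) = (n + 1) * n.factorial := by
      rw [Nat.factorial_succ]; push_cast; ring
    have h2 : (0:ℝ) < gm n := gm_pos n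
    have h3 : (0:ℝ) ≤ (n:ℝ) := by positivity
    rw [h1, mul_pow]
    nlinarith [sq_nonneg (gm n), (by positivity : (0:ℝ) ≤ (n.factorial:ℝ))]

lemma gm_le_add (m i : ℕ) : gm m ≤ gm (m + i) := by
  induction i with
  | zero => exact le_of_eq rfl
  | succ k ih =>
    rw [show m + (k+1) = (m+k) + 1 by ring, gm_succ]
    have := gm_pos (m + k)
    nlinarith [(by positivity : (0:ℝ) ≤ ((m+k : ℕ):ℝ))]

lemma gm_inv_le (m i : ℕ) : 1 / (gm m * gm (m + i)) ≤ 2 / m.factorial := by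
  have h1 : (m.factorial : ℝ) / 2 ≤ gm m * gm (m + i) := by
    calc (m.factorial : ℝ) / 2 ≤ gm m ^ 2 := gm_sq_ge m
      _ ≤ gm m * gm (m + i) := by
          have := gm_pos m
          nlinarith [gm_le_add m i]
  have h2 : (0:ℝ) < (m.factorial : ℝ) / 2 := by positivity
  calc 1 / (gm m * gm (m + i)) ≤ 1 / ((m.factorial : ℝ) / 2) :=
        one_div_le_one_div_of_le h2 h1
    _ = 2 / m.factorial := by field_simp

lemma besselJ_eq (i : ℕ) (x : ℝ) : besselJ i x =
    ∑' m : ℕ, ((-1:ℝ)^m / (m.factorial * (m + i).factorial)) * (x/2)^(2*m+i) := by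
  unfold besselJ
  congr 1
  funext m
  rw [show ((m:ℝ) + 1 + i) = ((m + i : ℕ) : ℝ) + 1 by push_cast; ring,
    Real.Gamma_nat_eq_factorial]

lemma struveH_eq (i : ℕ) (x : ℝ) : struveH i x =
    ∑' m : ℕ, ((-1:ℝ)^m / (gm m * gm (m + i))) * (x/2)^(2*m+i+1) := by
  unfold struveH gm
  congr 1
  funext m
  congr 3
  push_cast
  ring

lemma besselJ_coeff_bound (i : ℕ) (m : ℕ) :
    |(-1:ℝ)^m / (m.factorial * (m + i).factorial)| ≤ 4 / m.factorial := by
  rw [abs_div, abs_pow, abs_neg, abs_one, one_pow, abs_mul, Nat.abs_cast, Nat.abs_cast]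
  have h1 : (1:ℝ) ≤ (m + i).factorial := by
    exact_mod_cast Nat.one_le_iff_ne_zero.mpr (Nat.factorial_ne_zero _)
  have h2 : (0:ℝ) < m.factorial := by positivity
  rw [div_le_div_iff₀ (by positivity) h2]
  nlinarith

lemma struveH_coeff_bound (i : ℕ) (m : ℕ) :
    |(-1:ℝ)^m / (gm m * gm (m + i))| ≤ 4 / m.factorial := by
  rw [abs_div, abs_pow, abs_neg, abs_one, one_pow,
    abs_of_pos (mul_pos (gm_pos m) (gm_pos (m+i)))]
  calc 1 / (gm m * gm (m + i)) ≤ 2 / m.factorial := gm_inv_le m i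
    _ ≤ 4 / m.factorial := by
        have : (0:ℝ) < m.factorial := by positivity
        gcongr <;> norm_num

lemma deriv_summable {c : ℕ → ℝ} {q : ℕ → ℕ} (hc : ∀ m, |c m| ≤ 4 / m.factorial)
    (hq : ∀ m, q m ≤ 2 * m + 3) (y : ℝ) :
    Summable fun m => c m * q m * y ^ (q m - 1) / 2 := by
  have hM : 1 ≤ max 1 |y| := le_max_left _ _
  have hy : |y| ≤ max 1 |y| := le_max_right _ _
  set M := max 1 |y| with hMdef
  apply Summable.of_abs
  refine Summable.of_nonneg_of_le (fun m => abs_nonneg _) (fun m => ?_)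
    ((ITH.summable_core (M ^ 2) (by positivity)).mul_left (2 * M ^ 3))
  have hf : (0:ℝ) < m.factorial := by positivity
  have h1 : |y ^ (q m - 1)| ≤ M ^ (2 * m + 3) := by
    rw [abs_pow]
    calc |y| ^ (q m - 1) ≤ M ^ (q m - 1) := pow_le_pow_left₀ (abs_nonneg _) hy _
      _ ≤ M ^ (2 * m + 3) := pow_le_pow_right₀ hM (by have := hq m; omega)
  have hq' : ((q m : ℕ) : ℝ) ≤ 2 * m + 3 := by exact_mod_cast hq m
  have key : |c m| * (q m : ℝ) * |y ^ (q m - 1)| ≤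
      4 / m.factorial * (2 * m + 3) * ((M ^ 2) ^ m * M ^ 3) := by
    apply mul_le_mul (mul_le_mul (hc m) hq' (by positivity) (by positivity))
      (h1.trans_eq (by ring)) (abs_nonneg _) (by positivity)
  rw [abs_div, abs_mul, abs_mul, Nat.abs_cast, abs_two]
  calc |c m| * (q m : ℝ) * |y ^ (q m - 1)| / 2
      ≤ (4 / m.factorial * (2 * m + 3) * ((M ^ 2) ^ m * M ^ 3)) / 2 := by gcongr
    _ = 2 * M ^ 3 * ((2 * (m:ℝ) + 3) / m.factorial * (M ^ 2) ^ m) := by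
        field_simp; ring

lemma besselJ_hda (i : ℕ) (hi : i ≤ 3) (x : ℝ) :
    HasDerivAt (fun y => ∑' m : ℕ, ((-1:ℝ)^m / (m.factorial * (m+i).factorial)) * (y/2)^(2*m+i))
      (∑' m : ℕ, ((-1:ℝ)^m / (m.factorial * (m+i).factorial)) * ((2*m+i : ℕ) : ℝ) *
        (x/2)^(2*m+i-1) / 2) x :=
  ITH.hasDerivAt_series (besselJ_coeff_bound i) (fun m => by omega) x

lemma struveH_hda (i : ℕ) (hi : i ≤ 2) (x : ℝ) :
    HasDerivAt (fun y => ∑' m : ℕ, ((-1:ℝ)^m / (gm m * gm (m+i))) * (y/2)^(2*m+i+1))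
      (∑' m : ℕ, ((-1:ℝ)^m / (gm m * gm (m+i))) * ((2*m+i+1 : ℕ) : ℝ) *
        (x/2)^(2*m+i+1-1) / 2) x :=
  ITH.hasDerivAt_series (struveH_coeff_bound i) (fun m => by omega) x

lemma deriv_besselJ0 (x : ℝ) : HasDerivAt (besselJ 0) (-besselJ 1 x) x := by
  have h := besselJ_hda 0 (by norm_num) x
  rw [show (fun y => ∑' m : ℕ, ((-1:ℝ)^m / (m.factorial * (m+0).factorial)) * (y/2)^(2*m+0))
      = besselJ 0 from funext fun y => (besselJ_eq 0 y).symm] at h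
  convert h using 1
  have hs := deriv_summable (q := fun m => 2*m+0) (besselJ_coeff_bound 0) (fun m => Nat.le.intro (k := 3) rfl) (x/2)
  rw [besselJ_eq, hs.tsum_eq_zero_add]
  rw [show ((-1:ℝ)^0 / ((0:ℕ).factorial * (0+0 : ℕ).factorial)) * ((2*0+0 : ℕ) : ℝ) *
      (x/2)^(2*0+0-1) / 2 = 0 by norm_num, zero_add, ← tsum_neg]
  apply tsum_congr
  intro m
  rw [show 2*(m+1)+0-1 = 2*m+1 from rfl]
  have e1 : ((m+1).factorial : ℝ) = (m+1) * m.factorial := by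
    rw [Nat.factorial_succ]; push_cast; ring
  have hf : ((m.factorial : ℝ)) ≠ 0 := by positivity
  have hm1 : ((m:ℝ) + 1) ≠ 0 := by positivity
  rw [e1]
  push_cast
  field_simp
  ring

lemma mul_besselJ1_eq (y : ℝ) : y * besselJ 1 y =
    ∑' m : ℕ, (2 * (-1:ℝ)^m / (m.factorial * (m+1).factorial)) * (y/2)^(2*m+2) := by
  rw [besselJ_eq, ← tsum_mul_left]
  apply tsum_congr
  intro m
  rw [show 2*m+2 = (2*m+1)+1 from rfl, pow_succ]
  ring

lemma mul_struveH1_eq (y : ℝ) : y * struveH 1 y =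
    ∑' m : ℕ, (2 * (-1:ℝ)^m / (gm m * gm (m+1))) * (y/2)^(2*m+3) := by
  rw [struveH_eq, ← tsum_mul_left]
  apply tsum_congr
  intro m
  rw [show 2*m+3 = (2*m+1+1)+1 from rfl, pow_succ]
  ring

lemma xJ1_coeff_bound (m : ℕ) :
    |2 * (-1:ℝ)^m / (m.factorial * (m+1).factorial)| ≤ 4 / m.factorial := by
  rw [abs_div, abs_mul, abs_pow, abs_neg, abs_one, one_pow, abs_two, mul_one, abs_mul,
    Nat.abs_cast, Nat.abs_cast]
  have h1 : (1:ℝ) ≤ (m + 1).factorial := by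
    exact_mod_cast Nat.one_le_iff_ne_zero.mpr (Nat.factorial_ne_zero _)
  have h2 : (0:ℝ) < m.factorial := by positivity
  rw [div_le_div_iff₀ (by positivity) h2]
  nlinarith

lemma xH1_coeff_bound (m : ℕ) :
    |2 * (-1:ℝ)^m / (gm m * gm (m+1))| ≤ 4 / m.factorial := by
  rw [abs_div, abs_mul, abs_pow, abs_neg, abs_one, one_pow, abs_two, mul_one,
    abs_of_pos (mul_pos (gm_pos m) (gm_pos (m+1)))]
  have h := gm_inv_le m 1
  have h2 : (0:ℝ) < m.factorial := by positivity
  calc 2 / (gm m * gm (m+1)) = 2 * (1 / (gm m * gm (m+1))) := by ring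
    _ ≤ 2 * (2 / m.factorial) := by
        apply mul_le_mul_of_nonneg_left h (by norm_num)
    _ = 4 / m.factorial := by ring

lemma deriv_xJ1 (x : ℝ) : HasDerivAt (fun y => y * besselJ 1 y) (x * besselJ 0 x) x := by
  have h := ITH.hasDerivAt_series (c := fun m => 2 * (-1:ℝ)^m / (m.factorial * (m+1).factorial))
    (q := fun m => 2*m+2) xJ1_coeff_bound (fun m => Nat.le.intro (k := 1) rfl) x
  rw [show (fun y : ℝ => ∑' m : ℕ, (2 * (-1:ℝ)^m / (m.factorial * (m+1).factorial)) * (y/2)^(2*m+2))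
      = fun y => y * besselJ 1 y from funext fun y => (mul_besselJ1_eq y).symm] at h
  convert h using 1
  rw [besselJ_eq, ← tsum_mul_left]
  apply tsum_congr
  intro m
  rw [show 2*m+2-1 = (2*m+0)+1 from rfl, pow_succ]
  have e1 : ((m+1).factorial : ℝ) = (m+1) * m.factorial := by
    rw [Nat.factorial_succ]; push_cast; ring
  have hf : ((m.factorial : ℝ)) ≠ 0 := by positivity
  have hm1 : ((m:ℝ) + 1) ≠ 0 := by positivity
  rw [e1]
  push_cast
  field_simp
  ring

lemma deriv_struveH0 (x : ℝ) : HasDerivAt (struveH 0) (2/π - struveH 1 x) x := by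
  have h := struveH_hda 0 (by norm_num) x
  rw [show (fun y => ∑' m : ℕ, ((-1:ℝ)^m / (gm m * gm (m+0))) * (y/2)^(2*m+0+1))
      = struveH 0 from funext fun y => (struveH_eq 0 y).symm] at h
  convert h using 1
  have hs := deriv_summable (q := fun m => 2*m+0+1) (struveH_coeff_bound 0) (fun m => Nat.le.intro (k := 2) rfl) (x/2)
  rw [hs.tsum_eq_zero_add]
  have h0 : ((-1:ℝ)^0 / (gm 0 * gm (0+0))) * ((2*0+0+1 : ℕ) : ℝ) * (x/2)^(2*0+0+1-1) / 2
      = 2/π := by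
    rw [show (0+0 : ℕ) = 0 from rfl, gm_zero]
    have : √π * √π = π := Real.mul_self_sqrt pi_pos.le
    norm_num
    field_simp
    linarith [this]
  rw [h0, struveH_eq, sub_eq_add_neg, ← tsum_neg]
  congr 1
  apply tsum_congr
  intro m
  have hg : gm (m+1) = ((m:ℝ) + 3/2) * gm m := gm_succ m
  have hgm := gm_ne m
  have hgm1 := gm_ne (m+1)
  rw [show 2*(m+1)+0+1-1 = 2*m+0+1+1 from rfl, pow_succ, pow_succ]
  push_cast
  rw [hg]
  field_simp
  ring

lemma deriv_xH1 (x : ℝ) : HasDerivAt (fun y => y * struveH 1 y) (x * struveH 0 x) x := by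
  have h := ITH.hasDerivAt_series (c := fun m => 2 * (-1:ℝ)^m / (gm m * gm (m+1)))
    (q := fun m => 2*m+3) xH1_coeff_bound (fun m => Nat.le.intro (k := 0) rfl) x
  rw [show (fun y : ℝ => ∑' m : ℕ, (2 * (-1:ℝ)^m / (gm m * gm (m+1))) * (y/2)^(2*m+3))
      = fun y => y * struveH 1 y from funext fun y => (mul_struveH1_eq y).symm] at h
  convert h using 1
  rw [struveH_eq, ← tsum_mul_left]
  apply tsum_congr
  intro m
  have hg : gm (m+1) = ((m:ℝ) + 3/2) * gm m := gm_succ m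
  have hgm := gm_ne m
  rw [show 2*m+3-1 = (2*m+0+1)+1 from rfl, pow_succ, hg]
  push_cast
  field_simp
  ring_nf
  simp [hgm]

noncomputable def Tfun (x : ℝ) : ℝ :=
  ∑' m : ℕ, ((-1:ℝ)^m * 8 / ((m.factorial:ℝ)^2 * (2*(m:ℝ)+2) * (2*(m:ℝ)+3))) * (x/2)^(2*m+3)

lemma Tfun_coeff_bound (m : ℕ) :
    |(-1:ℝ)^m * 8 / ((m.factorial:ℝ)^2 * (2*(m:ℝ)+2) * (2*(m:ℝ)+3))| ≤ 4 / (m.factorial:ℝ) := by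
  rw [abs_div, abs_mul, abs_pow, abs_neg, abs_one, one_pow, one_mul]
  have h2 : (0:ℝ) < m.factorial := by positivity
  have hd : (0:ℝ) < (m.factorial:ℝ)^2 * (2*m+2) * (2*m+3) := by positivity
  rw [abs_of_pos hd, show |(8:ℝ)| = 8 by norm_num, div_le_div_iff₀ hd h2]
  have h1 : (1:ℝ) ≤ m.factorial := by
    exact_mod_cast Nat.one_le_iff_ne_zero.mpr (Nat.factorial_ne_zero _)
  have h3 : (0:ℝ) ≤ (m:ℝ) := by positivity
  have h4 : (m.factorial:ℝ) ≤ (m.factorial:ℝ)^2 := by nlinarith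
  have h5 : (2:ℝ) ≤ 2*(m:ℝ)+2 := by linarith
  have h6 : (3:ℝ) ≤ 2*(m:ℝ)+3 := by linarith
  have key : 6 * (m.factorial:ℝ) ≤ (m.factorial:ℝ)^2 * (2*(m:ℝ)+2) * (2*(m:ℝ)+3) := by
    calc 6*(m.factorial:ℝ) = (m.factorial:ℝ) * 2 * 3 := by ring
      _ ≤ ((m.factorial:ℝ)^2 * (2*(m:ℝ)+2)) * (2*(m:ℝ)+3) := by
          apply mul_le_mul (mul_le_mul h4 h5 (by norm_num) (by positivity)) h6 (by norm_num)
            (by positivity)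
  nlinarith [key]

lemma deriv_Tfun (x : ℝ) : HasDerivAt Tfun (x * besselJ 1 x) x := by
  have h := ITH.hasDerivAt_series
    (c := fun m => (-1:ℝ)^m * 8 / ((m.factorial:ℝ)^2 * (2*(m:ℝ)+2) * (2*(m:ℝ)+3)))
    (q := fun m => 2*m+3) Tfun_coeff_bound (fun m => Nat.le.intro (k := 0) rfl) x
  rw [show (fun y : ℝ => ∑' m : ℕ, ((-1:ℝ)^m * 8 / ((m.factorial:ℝ)^2 * (2*(m:ℝ)+2) * (2*(m:ℝ)+3)))
      * (y/2)^(2*m+3)) = Tfun from rfl] at h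
  convert h using 1
  rw [besselJ_eq, ← tsum_mul_left]
  apply tsum_congr
  intro m
  rw [show 2*m+3-1 = (2*m+1)+1 from rfl, pow_succ]
  have e1 : ((m+1).factorial : ℝ) = (m+1) * m.factorial := by
    rw [Nat.factorial_succ]; push_cast; ring
  have hf : ((m.factorial : ℝ)) ≠ 0 := by positivity
  have hm1 : ((m:ℝ) + 1) ≠ 0 := by positivity
  rw [e1]
  push_cast
  field_simp
  ring

lemma Tfun_zero : Tfun 0 = 0 := by
  unfold Tfun
  have : ∀ m : ℕ, ((-1:ℝ)^m * 8 / ((m.factorial:ℝ)^2 * (2*(m:ℝ)+2) * (2*(m:ℝ)+3))) * ((0:ℝ)/2)^(2*m+3) = 0 := by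
    intro m
    norm_num
  rw [tsum_congr this, tsum_zero]

lemma key_identity (x : ℝ) :
    x * (besselJ 1 x * struveH 0 x - besselJ 0 x * struveH 1 x) = 2/π * Tfun x := by
  have key : ∀ y : ℝ, HasDerivAt (fun t => (t * besselJ 1 t) * struveH 0 t
      - besselJ 0 t * (t * struveH 1 t) - 2/π * Tfun t) 0 y := by
    intro y
    have h := (((deriv_xJ1 y).mul (deriv_struveH0 y)).sub
      ((deriv_besselJ0 y).mul (deriv_xH1 y))).sub ((deriv_Tfun y).const_mul (2/π))
    refine h.congr_deriv ?_
    ring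
  have hdiff : Differentiable ℝ (fun t => (t * besselJ 1 t) * struveH 0 t
      - besselJ 0 t * (t * struveH 1 t) - 2/π * Tfun t) := fun y => (key y).differentiableAt
  have hconst := is_const_of_deriv_eq_zero hdiff (fun y => (key y).deriv) x 0
  simp only [zero_mul, mul_zero, Tfun_zero, sub_zero, sub_self] at hconst
  have expand : x * (besselJ 1 x * struveH 0 x - besselJ 0 x * struveH 1 x)
      = (x * besselJ 1 x) * struveH 0 x - besselJ 0 x * (x * struveH 1 x) := by ring
  rw [expand]
  linarith [hconst]



noncomputable def pot1 (R ℓ : ℝ) (r : ℝ) : ℝ := if r < R then (r - ℓ)^2 - (R - ℓ)^2 else 0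

lemma pot1_meas (R ℓ : ℝ) : Measurable (pot1 R ℓ) := by
  unfold pot1
  exact Measurable.ite (measurableSet_lt measurable_id measurable_const)
    (((measurable_id.sub_const ℓ).pow_const 2).sub_const ((R - ℓ)^2)) measurable_const

lemma pot1_bound {R ℓ : ℝ} (hR : 0 < R) (hℓ : 0 ≤ ℓ) {r : ℝ} (hr : 0 ≤ r) :
    |pot1 R ℓ r| ≤ (R+ℓ)^2 + (R-ℓ)^2 := by
  unfold pot1
  split_ifs with h
  · rw [abs_le]
    constructor <;> nlinarith [sq_nonneg (r - ℓ), sq_nonneg (R - ℓ), sq_nonneg (R + ℓ)]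
  · rw [abs_zero]
    positivity

lemma prod_ratio (m : ℕ) : ∏ i ∈ Finset.range m, ((2*(i:ℝ)+1)/(2*(i:ℝ)+2))
    = ((2*m).factorial : ℝ)/((4:ℝ)^m * (m.factorial:ℝ)^2) := by
  induction m with
  | zero => simp
  | succ n ih =>
    rw [Finset.prod_range_succ, ih]
    have e1 : (2*(n+1)) = (2*n+1) + 1 := by ring
    rw [e1, Nat.factorial_succ, Nat.factorial_succ, Nat.factorial_succ]
    have h1 : ((2*n).factorial : ℝ) ≠ 0 := by positivity
    have h2 : ((n.factorial : ℝ)) ≠ 0 := by positivity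
    have h3 : ((4:ℝ)^n) ≠ 0 := by positivity
    have h4 : (2*(n:ℝ)+2) ≠ 0 := by positivity
    push_cast
    field_simp
    ring

lemma sin_pow_periodic (m : ℕ) : Function.Periodic (fun x : ℝ => Real.sin x ^ (2*m)) π := by
  intro x
  simp only [Real.sin_add_pi]
  rw [Even.neg_pow (even_two_mul m)]

lemma cos_pow_integral (m : ℕ) : (∫ θ in Set.Ioo (-π) π, Real.cos θ^(2*m))
    = 2*π*((2*m).factorial:ℝ)/((4:ℝ)^m * (m.factorial:ℝ)^2) := by
  have hle : -π ≤ π := by linarith [pi_pos]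
  have h1 : (∫ θ in Set.Ioo (-π) π, Real.cos θ^(2*m)) = ∫ θ in (-π)..π, Real.cos θ^(2*m) := by
    rw [intervalIntegral.integral_of_le hle, integral_Ioc_eq_integral_Ioo]
  rw [h1]
  have h2 : (∫ θ in (-π)..π, Real.cos θ^(2*m))
      = ∫ x in (π/2 - π)..(π/2 - (-π)), Real.sin x ^ (2*m) := by
    rw [← intervalIntegral.integral_comp_sub_left (fun u => Real.sin u ^ (2*m)) (π/2)]
    congr 1
    funext x
    rw [Real.sin_pi_div_two_sub]
  rw [h2]
  have hIcont : ∀ a b : ℝ, IntervalIntegrable (fun x => Real.sin x ^ (2*m)) volume a b :=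
    fun a b => (Real.continuous_sin.pow (2*m)).intervalIntegrable a b
  have h3 : (∫ x in (π/2 - π)..(π/2 - (-π)), Real.sin x ^ (2*m))
      = (∫ x in (π/2 - π)..(π/2), Real.sin x ^ (2*m))
        + ∫ x in (π/2)..(π/2 - (-π)), Real.sin x ^ (2*m) := by
    rw [intervalIntegral.integral_add_adjacent_intervals (hIcont _ _) (hIcont _ _)]
  rw [h3]
  have hper := sin_pow_periodic m
  have h4 : (∫ x in (π/2 - π)..(π/2), Real.sin x ^ (2*m)) = ∫ x in (0:ℝ)..π, Real.sin x ^ (2*m) := by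
    have := hper.intervalIntegral_add_eq (π/2 - π) 0
    rw [show π/2 - π + π = π/2 by ring, zero_add] at this
    exact this
  have h5 : (∫ x in (π/2)..(π/2 - (-π)), Real.sin x ^ (2*m))
      = ∫ x in (0:ℝ)..π, Real.sin x ^ (2*m) := by
    have := hper.intervalIntegral_add_eq (π/2) 0
    rw [show π/2 + π = π/2 - (-π) by ring, zero_add] at this
    exact this
  rw [h4, h5, integral_sin_pow_even, prod_ratio]
  ring

lemma radial_int {R : ℝ} (ℓ : ℝ) (hR : 0 < R) (m : ℕ) (c : ℝ) :
    (∫ r in Set.Ioo (0:ℝ) R, pot1 R ℓ r * c * r^(2*m+1))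
      = c * (R^(2*m+4)/(2*(m:ℝ)+4) - 2*ℓ*R^(2*m+3)/(2*(m:ℝ)+3)
        + (2*ℓ*R - R^2) * R^(2*m+2)/(2*(m:ℝ)+2)) := by
  rw [setIntegral_congr_fun measurableSet_Ioo
    (g := fun r => c * (r^(2*m+3) + (-2*ℓ) * r^(2*m+2) + (2*ℓ*R - R^2) * r^(2*m+1)))
    (f := fun r => pot1 R ℓ r * c * r^(2*m+1)) ?_]
  · rw [← integral_Ioc_eq_integral_Ioo, ← intervalIntegral.integral_of_le hR.le,
      intervalIntegral.integral_const_mul]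
    have i1 : IntervalIntegrable (fun r : ℝ => r ^ (2*m+3)) volume 0 R :=
      (continuous_pow _).intervalIntegrable 0 R
    have i2 : IntervalIntegrable (fun r : ℝ => (-2*ℓ) * r ^ (2*m+2)) volume 0 R :=
      (continuous_const.mul (continuous_pow _)).intervalIntegrable 0 R
    have i3 : IntervalIntegrable (fun r : ℝ => (2*ℓ*R - R^2) * r ^ (2*m+1)) volume 0 R :=
      (continuous_const.mul (continuous_pow _)).intervalIntegrable 0 R
    rw [intervalIntegral.integral_add (i1.add i2) i3, intervalIntegral.integral_add i1 i2,
      intervalIntegral.integral_const_mul, intervalIntegral.integral_const_mul,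
      integral_pow, integral_pow, integral_pow]
    congr 1
    push_cast
    norm_num
    ring
  · intro r hr
    simp only [pot1, if_pos hr.2]
    ring


lemma potV2_eq (R ℓ : ℝ) (x : ℝ × ℝ) : potV2 R ℓ x = pot1 R ℓ (Real.sqrt (x.1^2 + x.2^2)) := rfl

lemma potV2_meas (R ℓ : ℝ) : Measurable (potV2 R ℓ) := by
  have h : Measurable fun x : ℝ × ℝ => Real.sqrt (x.1^2 + x.2^2) :=
    (Real.continuous_sqrt.comp ((continuous_fst.pow 2).add (continuous_snd.pow 2))).measurable
  exact (pot1_meas R ℓ).comp h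

section Main

variable {L R ℓ : ℝ}

lemma vhat_re_eq (hL : 0 < L) (hR : 0 < R) (hRL : R ≤ L) (hℓ : 0 ≤ ℓ) :
    (Vhat2C L R ℓ 1 0).re = (1/(2*L))^2 * ∑' m : ℕ,
      ((-1:ℝ)^m * (π/L)^(2*m) / ((2*m).factorial)) *
        (R^(2*m+4)/(2*(m:ℝ)+4) - 2*ℓ*R^(2*m+3)/(2*(m:ℝ)+3)
          + (2*ℓ*R - R^2) * R^(2*m+2)/(2*(m:ℝ)+2)) *
        (2*π*((2*m).factorial:ℝ)/((4:ℝ)^m * (m.factorial:ℝ)^2)) := by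
  have hCb : (0:ℝ) ≤ (R+ℓ)^2 + (R-ℓ)^2 := by positivity
  set Cb := (R+ℓ)^2 + (R-ℓ)^2 with hCbdef
  set S := Set.Icc (-L) L ×ˢ Set.Icc (-L) L with hSdef
  have hSfin : volume S < ⊤ := by
    rw [hSdef, Measure.volume_eq_prod, Measure.prod_prod]
    exact ENNReal.mul_lt_top (by rw [Real.volume_Icc]; exact ENNReal.ofReal_lt_top)
      (by rw [Real.volume_Icc]; exact ENNReal.ofReal_lt_top)
  have hexp : ∀ x : ℝ × ℝ, -(Complex.I * (π:ℂ) * (((1:ℤ):ℂ) * (x.1:ℂ) + ((0:ℤ):ℂ) * (x.2:ℂ))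
      / (L:ℂ)) = ((-(π * x.1 / L) : ℝ) : ℂ) * Complex.I := by
    intro x
    have hLne : (L:ℂ) ≠ 0 := by exact_mod_cast hL.ne'
    push_cast
    field_simp
    ring
  have hInt : Integrable (fun x : ℝ × ℝ => (potV2 R ℓ x : ℂ) *
      Complex.exp (-(Complex.I * (π:ℂ) * (((1:ℤ):ℂ) * (x.1:ℂ) + ((0:ℤ):ℂ) * (x.2:ℂ)) / (L:ℂ))))
      (volume.restrict S) := by
    apply Integrable.mono' (g := fun _ => Cb) ?_ ?_ ?_
    · apply integrable_const_iff.mpr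
      right
      exact isFiniteMeasure_restrict.2 hSfin.ne
    · apply AEStronglyMeasurable.mul
      · exact (Complex.measurable_ofReal.comp (potV2_meas R ℓ)).aestronglyMeasurable
      · apply Continuous.aestronglyMeasurable
        apply Complex.continuous_exp.comp
        fun_prop
    · filter_upwards with x
      rw [norm_mul, hexp x,
        Complex.norm_exp_ofReal_mul_I, mul_one, Complex.norm_real, Real.norm_eq_abs]
      rw [potV2_eq]
      exact pot1_bound hR hℓ (Real.sqrt_nonneg _)
  have step1 : (Vhat2C L R ℓ 1 0).re
      = (1/(2*L))^2 * ∫ x in S, potV2 R ℓ x * Real.cos (-(π * x.1 / L)) := by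
    unfold Vhat2C
    have hco : ((1 / (2 * (L:ℂ)))^2) = (((1/(2*L))^2 : ℝ) : ℂ) := by push_cast; ring
    rw [hco, Complex.re_ofReal_mul]
    congr 1
    have hre : (∫ x in S, (potV2 R ℓ x : ℂ) *
        Complex.exp (-(Complex.I * (π:ℂ) * (((1:ℤ):ℂ) * (x.1:ℂ) + ((0:ℤ):ℂ) * (x.2:ℂ)) /
          (L:ℂ)))).re = ∫ x in S, ((potV2 R ℓ x : ℂ) *
        Complex.exp (-(Complex.I * (π:ℂ) * (((1:ℤ):ℂ) * (x.1:ℂ) + ((0:ℤ):ℂ) * (x.2:ℂ)) /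
          (L:ℂ)))).re := (integral_re hInt).symm
    rw [hSdef] at hre ⊢
    rw [hre]
    apply setIntegral_congr_fun (measurableSet_Icc.prod measurableSet_Icc)
    intro x _
    simp only [hexp x, Complex.mul_re, Complex.ofReal_re, Complex.ofReal_im, zero_mul, sub_zero,
      Complex.exp_ofReal_mul_I_re]
  have hcos : ∀ x : ℝ × ℝ, Real.cos (-(π * x.1 / L)) = Real.cos (π * x.1 / L) :=
    fun x => Real.cos_neg _
  have step2 : (∫ x in S, potV2 R ℓ x * Real.cos (-(π * x.1 / L)))
      = ∫ x : ℝ × ℝ, potV2 R ℓ x * Real.cos (π * x.1 / L) := by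
    simp_rw [hcos]
    apply setIntegral_eq_integral_of_forall_compl_eq_zero
    intro x hx
    have hzero : potV2 R ℓ x = 0 := by
      rw [potV2_eq]
      unfold pot1
      rw [if_neg]
      push_neg
      apply Real.le_sqrt_of_sq_le
      rw [hSdef, Set.mem_prod] at hx
      push_neg at hx
      rcases Classical.em (x.1 ∈ Set.Icc (-L) L) with h1 | h1
      · have h2 := hx h1
        rw [Set.mem_Icc] at h2
        push_neg at h2
        have : L ^ 2 ≤ x.2 ^ 2 := by
          rcases Classical.em (x.2 < -L) with h3 | h3
          · nlinarith
          · push_neg at h3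
            have := h2 h3
            nlinarith
        nlinarith [sq_nonneg x.1, sq_nonneg R]
      · rw [Set.mem_Icc] at h1
        push_neg at h1
        have : L ^ 2 ≤ x.1 ^ 2 := by
          rcases Classical.em (x.1 < -L) with h3 | h3
          · nlinarith
          · push_neg at h3
            have := h1 h3
            nlinarith
        nlinarith [sq_nonneg x.2, sq_nonneg R]
    rw [hzero, zero_mul]
  have step3 : (∫ x : ℝ × ℝ, potV2 R ℓ x * Real.cos (π * x.1 / L))
      = ∫ p in polarCoord.target, p.1 • (potV2 R ℓ (polarCoord.symm p)
        * Real.cos (π * (polarCoord.symm p).1 / L)) :=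
    (integral_comp_polarCoord_symm fun x => potV2 R ℓ x * Real.cos (π * x.1 / L)).symm
  have hsymm : ∀ p : ℝ × ℝ, polarCoord.symm p = (p.1 * Real.cos p.2, p.1 * Real.sin p.2) :=
    fun p => rfl
  have step4 : (∫ p in polarCoord.target, p.1 • (potV2 R ℓ (polarCoord.symm p)
        * Real.cos (π * (polarCoord.symm p).1 / L)))
      = ∫ p in Set.Ioi (0:ℝ) ×ˢ Set.Ioo (-π) π,
          p.1 * (pot1 R ℓ p.1 * Real.cos (π * (p.1 * Real.cos p.2) / L)) := by
    rw [show polarCoord.target = Set.Ioi (0:ℝ) ×ˢ Set.Ioo (-π) π from rfl]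
    apply setIntegral_congr_fun (measurableSet_Ioi.prod measurableSet_Ioo)
    intro p hp
    have hp1 : 0 < p.1 := hp.1
    have hsq : (p.1 * Real.cos p.2)^2 + (p.1 * Real.sin p.2)^2 = p.1^2 := by
      rw [mul_pow, mul_pow, ← mul_add, Real.cos_sq_add_sin_sq, mul_one]
    have hpot : potV2 R ℓ (p.1 * Real.cos p.2, p.1 * Real.sin p.2) = pot1 R ℓ p.1 := by
      rw [potV2_eq]
      simp only
      rw [hsq, Real.sqrt_sq hp1.le]
    show p.1 • (potV2 R ℓ (polarCoord.symm p) * Real.cos (π * (polarCoord.symm p).1 / L))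
      = p.1 * (pot1 R ℓ p.1 * Real.cos (π * (p.1 * Real.cos p.2) / L))
    rw [hsymm p, smul_eq_mul, hpot]
  have step5 : (∫ p in Set.Ioi (0:ℝ) ×ˢ Set.Ioo (-π) π,
        p.1 * (pot1 R ℓ p.1 * Real.cos (π * (p.1 * Real.cos p.2) / L)))
      = ∫ p in Set.Ioo (0:ℝ) R ×ˢ Set.Ioo (-π) π,
          p.1 * (pot1 R ℓ p.1 * Real.cos (π * (p.1 * Real.cos p.2) / L)) := by
    apply setIntegral_eq_of_subset_of_forall_diff_eq_zero
      (measurableSet_Ioi.prod measurableSet_Ioo)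
      (Set.prod_mono Set.Ioo_subset_Ioi_self subset_rfl)
    intro p hp
    have h1 : pot1 R ℓ p.1 = 0 := by
      unfold pot1
      rw [if_neg]
      push_neg
      rcases hp with ⟨hpt, hps⟩
      rcases Classical.em (p.1 < R) with h | h
      · exfalso
        exact hps ⟨⟨hpt.1, h⟩, hpt.2⟩
      · linarith [not_lt.mp h]
    rw [h1, zero_mul, mul_zero]

  set s' : Set (ℝ × ℝ) := Set.Ioo (0:ℝ) R ×ˢ Set.Ioo (-π) π with hs'def
  have hs'meas : MeasurableSet s' := measurableSet_Ioo.prod measurableSet_Ioo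
  have hs'fin : volume s' < ⊤ := by
    rw [hs'def, Measure.volume_eq_prod, Measure.prod_prod]
    exact ENNReal.mul_lt_top (by rw [Real.volume_Ioo]; exact ENNReal.ofReal_lt_top)
      (by rw [Real.volume_Ioo]; exact ENNReal.ofReal_lt_top)
  haveI hfinInst : IsFiniteMeasure (volume.restrict s') :=
    ⟨by rw [Measure.restrict_apply_univ]; exact hs'fin⟩
  set g : ℕ → ℝ × ℝ → ℝ := fun m p => pot1 R ℓ p.1 *
    ((-1:ℝ)^m * (π/L)^(2*m) / ((2*m).factorial : ℝ)) * p.1^(2*m+1) * Real.cos p.2 ^ (2*m)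
    with hgdef
  have hpt : ∀ p : ℝ × ℝ, p.1 * (pot1 R ℓ p.1 * Real.cos (π * (p.1 * Real.cos p.2) / L))
      = ∑' m, g m p := by
    intro p
    rw [Real.cos_eq_tsum (π * (p.1 * Real.cos p.2) / L), ← tsum_mul_left, ← tsum_mul_left]
    apply tsum_congr
    intro n
    rw [hgdef]
    simp only [div_pow, mul_pow]
    have hLne : (L:ℝ) ≠ 0 := hL.ne'
    have hfac : ((2*n).factorial : ℝ) ≠ 0 := by positivity
    field_simp
    ring
  have habs : ∀ m : ℕ, |(-1:ℝ)^m * (π/L)^(2*m) / ((2*m).factorial : ℝ)|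
      = (π/L)^(2*m) / ((2*m).factorial : ℝ) := by
    intro m
    rw [abs_div, abs_mul, abs_pow, abs_neg, abs_one, one_pow, one_mul, abs_pow,
      abs_of_pos (div_pos pi_pos hL), Nat.abs_cast]
  have hg_meas : ∀ m : ℕ, Measurable (g m) := by
    intro m
    rw [hgdef]
    exact ((((pot1_meas R ℓ).comp measurable_fst).mul_const _).mul
      (measurable_fst.pow_const _)).mul ((Real.measurable_cos.comp measurable_snd).pow_const _)
  set Cm : ℕ → ℝ := fun m => Cb * ((π/L)^(2*m) / ((2*m).factorial : ℝ)) * R^(2*m+1) with hCmdef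
  have hbound : ∀ m : ℕ, ∀ᵐ p ∂(volume.restrict s'), ‖g m p‖ ≤ Cm m := by
    intro m
    rw [ae_restrict_iff' hs'meas]
    filter_upwards with p hp
    rw [hs'def, Set.mem_prod] at hp
    have hp1 : 0 < p.1 := hp.1.1
    have hp2 : p.1 < R := hp.1.2
    rw [hgdef, hCmdef]
    simp only [Real.norm_eq_abs]
    rw [abs_mul, abs_mul, abs_mul, habs m]
    have b1 : |pot1 R ℓ p.1| ≤ Cb := pot1_bound hR hℓ hp1.le
    have b2 : |p.1^(2*m+1)| ≤ R^(2*m+1) := by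
      rw [abs_pow, abs_of_pos hp1]
      exact pow_le_pow_left₀ hp1.le hp2.le _
    have b3 : |Real.cos p.2 ^ (2*m)| ≤ 1 := by
      rw [abs_pow]
      exact pow_le_one₀ (abs_nonneg _) (Real.abs_cos_le_one p.2)
    have hcpos : (0:ℝ) ≤ (π/L)^(2*m) / ((2*m).factorial : ℝ) := by positivity
    calc |pot1 R ℓ p.1| * ((π/L)^(2*m) / ((2*m).factorial:ℝ)) * |p.1^(2*m+1)|
          * |Real.cos p.2 ^ (2*m)|
        ≤ Cb * ((π/L)^(2*m) / ((2*m).factorial:ℝ)) * R^(2*m+1) * 1 := by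
          apply mul_le_mul (mul_le_mul (mul_le_mul b1 (le_refl _) hcpos hCb)
            b2 (abs_nonneg _) (by positivity)) b3 (abs_nonneg _) (by positivity)
      _ = Cb * ((π/L)^(2*m) / ((2*m).factorial:ℝ)) * R^(2*m+1) := by ring
  have hg_int : ∀ m : ℕ, Integrable (g m) (volume.restrict s') := by
    intro m
    exact Integrable.mono' (integrable_const (Cm m)) (hg_meas m).aestronglyMeasurable (hbound m)
  have hnorm_le : ∀ m : ℕ, (∫ p in s', ‖g m p‖) ≤ Cm m * (volume s').toReal := by
    intro m
    calc (∫ p in s', ‖g m p‖) ≤ ∫ _ in s', Cm m := by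
          apply integral_mono_of_nonneg (ae_of_all _ fun p => norm_nonneg _)
            (integrable_const _) (hbound m)
      _ = Cm m * (volume s').toReal := by
          rw [integral_const, measureReal_restrict_apply_univ, smul_eq_mul, measureReal_def]
          ring
  have hsummable : Summable (fun m : ℕ => ∫ p in s', ‖g m p‖) := by
    refine Summable.of_nonneg_of_le (fun m => integral_nonneg fun p => norm_nonneg _)
      (fun m => (hnorm_le m).trans ?_)
      ((Real.summable_pow_div_factorial ((π/L)^2 * R^2)).mul_left
        (Cb * R * (volume s').toReal))
    simp only [hCmdef]
    have h1 : (π/L)^(2*m) = ((π/L)^2)^m := by rw [← pow_mul]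
    have h2 : R^(2*m+1) = (R^2)^m * R := by rw [← pow_mul, pow_succ]
    have h3 : ((m.factorial : ℝ)) ≤ ((2*m).factorial : ℝ) := by
      exact_mod_cast Nat.factorial_le (by omega)
    have h4 : (0:ℝ) < m.factorial := by positivity
    have h5 : ((π/L)^2)^m / ((2*m).factorial : ℝ) ≤ ((π/L)^2)^m / (m.factorial : ℝ) := by
      apply div_le_div_of_nonneg_left (by positivity) h4 h3
    calc Cb * ((π/L)^(2*m) / ((2*m).factorial:ℝ)) * R^(2*m+1) * (volume s').toReal
        = (Cb * ((R^2)^m * R) * (volume s').toReal) * (((π/L)^2)^m / ((2*m).factorial:ℝ)) := by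
          rw [h1, h2]; ring
      _ ≤ (Cb * ((R^2)^m * R) * (volume s').toReal) * (((π/L)^2)^m / (m.factorial:ℝ)) := by
          apply mul_le_mul_of_nonneg_left h5 (by positivity)
      _ = Cb * R * (volume s').toReal * (((π/L)^2 * R^2)^m / (m.factorial:ℝ)) := by
          rw [mul_pow]
          ring
  have step6 : (∫ p in s', p.1 * (pot1 R ℓ p.1 * Real.cos (π * (p.1 * Real.cos p.2) / L)))
      = ∑' m : ℕ, ∫ p in s', g m p := by
    rw [integral_congr_ae (ae_of_all _ hpt)]
    exact (integral_tsum_of_summable_integral_norm hg_int hsummable).symm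
  have step7 : ∀ m : ℕ, (∫ p in s', g m p)
      = ((-1:ℝ)^m * (π/L)^(2*m) / ((2*m).factorial)) *
        (R^(2*m+4)/(2*(m:ℝ)+4) - 2*ℓ*R^(2*m+3)/(2*(m:ℝ)+3)
          + (2*ℓ*R - R^2) * R^(2*m+2)/(2*(m:ℝ)+2)) *
        (2*π*((2*m).factorial:ℝ)/((4:ℝ)^m * (m.factorial:ℝ)^2)) := by
    intro m
    have hsep : (∫ p in s', g m p) = (∫ r in Set.Ioo (0:ℝ) R,
        pot1 R ℓ r * ((-1:ℝ)^m * (π/L)^(2*m) / ((2*m).factorial : ℝ)) * r^(2*m+1))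
        * ∫ θ in Set.Ioo (-π) π, Real.cos θ ^ (2*m) := by
      rw [hgdef, hs'def, Measure.volume_eq_prod]
      exact setIntegral_prod_mul (fun r => pot1 R ℓ r *
        ((-1:ℝ)^m * (π/L)^(2*m) / ((2*m).factorial : ℝ)) * r^(2*m+1))
        (fun θ => Real.cos θ ^ (2*m)) _ _
    rw [hsep, radial_int ℓ hR m _, cos_pow_integral m]
  rw [step1, step2, step3, step4, step5, step6]
  congr 1
  exact tsum_congr step7

end Main


lemma bco_bound (m : ℕ) : |(-1:ℝ)^m / ((4:ℝ)^m * (m.factorial:ℝ)^2 * (2*(m:ℝ)+2) * (2*(m:ℝ)+3))|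
    ≤ 4 / (m.factorial:ℝ) := by
  rw [abs_div, abs_pow, abs_neg, abs_one, one_pow]
  have hd : (0:ℝ) < (4:ℝ)^m * (m.factorial:ℝ)^2 * (2*(m:ℝ)+2) * (2*(m:ℝ)+3) := by positivity
  have h2 : (0:ℝ) < (m.factorial:ℝ) := by positivity
  rw [abs_of_pos hd, div_le_div_iff₀ hd h2]
  have h1 : (1:ℝ) ≤ m.factorial := by
    exact_mod_cast Nat.one_le_iff_ne_zero.mpr (Nat.factorial_ne_zero _)
  have h4 : (1:ℝ) ≤ (4:ℝ)^m := one_le_pow₀ (by norm_num)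
  have h3 : (0:ℝ) ≤ (m:ℝ) := by positivity
  have k1 : (m.factorial:ℝ) ≤ (m.factorial:ℝ)^2 := by nlinarith
  have k2 : (m.factorial:ℝ)^2 ≤ (4:ℝ)^m * (m.factorial:ℝ)^2 :=
    le_mul_of_one_le_left (by positivity) h4
  have k3 : (4:ℝ)^m * (m.factorial:ℝ)^2 ≤ (4:ℝ)^m * (m.factorial:ℝ)^2 * (2*(m:ℝ)+2) :=
    le_mul_of_one_le_right (by positivity) (by linarith)
  have k4 : (4:ℝ)^m * (m.factorial:ℝ)^2 * (2*(m:ℝ)+2)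
      ≤ (4:ℝ)^m * (m.factorial:ℝ)^2 * (2*(m:ℝ)+2) * (2*(m:ℝ)+3) :=
    le_mul_of_one_le_right (by positivity) (by linarith)
  nlinarith [k1, k2, k3, k4]

section Main2

variable {L R ℓ : ℝ}

lemma pi_vhat (hL : 0 < L) (hR : 0 < R) (hRL : R ≤ L) (hℓ : 0 ≤ ℓ) :
    π * (Vhat2C L R ℓ 1 0).re
      = -(R^2) * besselJ 2 (π*R/L)
        + ℓ * ∑' m : ℕ, R * ((-1:ℝ)^m / ((4:ℝ)^m * (m.factorial:ℝ)^2 * (2*(m:ℝ)+2)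
            * (2*(m:ℝ)+3))) * (π*R/L)^(2*m+2) := by
  rw [vhat_re_eq hL hR hRL hℓ, ← mul_assoc, ← tsum_mul_left]
  have Sa : Summable (fun m : ℕ => (-(R^2)) * (((-1:ℝ)^m / ((m.factorial:ℝ)
      * ((m+2).factorial:ℝ))) * (π*R/L/2)^(2*m+2))) := by
    apply Summable.mul_left
    exact ITH.summable_series (c := fun m => (-1:ℝ)^m / ((m.factorial:ℝ) * ((m+2).factorial:ℝ)))
      (q := fun m => 2*m+2) (besselJ_coeff_bound 2) (fun m => Nat.le.intro (k := 1) rfl) _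
  have Sb : Summable (fun m : ℕ => ℓ * (R * ((-1:ℝ)^m / ((4:ℝ)^m * (m.factorial:ℝ)^2
      * (2*(m:ℝ)+2) * (2*(m:ℝ)+3))) * (π*R/L)^(2*m+2))) := by
    apply Summable.mul_left
    have := (ITH.summable_series (c := fun m => (-1:ℝ)^m / ((4:ℝ)^m * (m.factorial:ℝ)^2
      * (2*(m:ℝ)+2) * (2*(m:ℝ)+3))) (q := fun m => 2*m+2) bco_bound
      (fun m => Nat.le.intro (k := 1) rfl) (π*R/L)).mul_left R
    exact this.congr (fun m => by ring)
  have hterm : ∀ m : ℕ, (π * (1/(2*L))^2) * (((-1:ℝ)^m * (π/L)^(2*m) / ((2*m).factorial)) *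
        (R^(2*m+4)/(2*(m:ℝ)+4) - 2*ℓ*R^(2*m+3)/(2*(m:ℝ)+3)
          + (2*ℓ*R - R^2) * R^(2*m+2)/(2*(m:ℝ)+2)) *
        (2*π*((2*m).factorial:ℝ)/((4:ℝ)^m * (m.factorial:ℝ)^2)))
      = (-(R^2)) * (((-1:ℝ)^m / ((m.factorial:ℝ) * ((m+2).factorial:ℝ))) * (π*R/L/2)^(2*m+2))
        + ℓ * (R * ((-1:ℝ)^m / ((4:ℝ)^m * (m.factorial:ℝ)^2 * (2*(m:ℝ)+2) * (2*(m:ℝ)+3)))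
            * (π*R/L)^(2*m+2)) := by
    intro m
    have h24 : (4:ℝ)^m = 2^(2*m) := by
      rw [show (4:ℝ) = 2^2 by norm_num, ← pow_mul]
    have hfac2 : ((m+2).factorial:ℝ) = ((m:ℝ)+2)*((m:ℝ)+1)*(m.factorial:ℝ) := by
      rw [Nat.factorial_succ, Nat.factorial_succ]; push_cast; ring
    have hLne : L ≠ 0 := hL.ne'
    have hf1 : (m.factorial:ℝ) ≠ 0 := by positivity
    have hf2 : ((2*m).factorial:ℝ) ≠ 0 := by positivity
    have hd2 : (2*(m:ℝ)+2) ≠ 0 := by positivity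
    have hd3 : (2*(m:ℝ)+3) ≠ 0 := by positivity
    have hd4 : (2*(m:ℝ)+4) ≠ 0 := by positivity
    have hm1 : ((m:ℝ)+1) ≠ 0 := by positivity
    have hm2 : ((m:ℝ)+2) ≠ 0 := by positivity
    simp only [div_pow, mul_pow]
    rw [h24, hfac2]
    field_simp
    ring
  rw [tsum_congr hterm, Sa.tsum_add Sb, tsum_mul_left, tsum_mul_left,
    ← besselJ_eq 2 (π*R/L)]

lemma sumb_eq (hL : 0 < L) (hR : 0 < R) :
    (π*R/L) * ∑' m : ℕ, R * ((-1:ℝ)^m / ((4:ℝ)^m * (m.factorial:ℝ)^2 * (2*(m:ℝ)+2)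
        * (2*(m:ℝ)+3))) * (π*R/L)^(2*m+2)
      = R * Tfun (π*R/L) := by
  rw [← tsum_mul_left]
  unfold Tfun
  rw [← tsum_mul_left]
  apply tsum_congr
  intro m
  have h23 : (2:ℝ)^(2*m+3) = (4:ℝ)^m * 8 := by
    rw [pow_add, pow_mul]
    norm_num
  have hf1 : (m.factorial:ℝ) ≠ 0 := by positivity
  have hd2 : (2*(m:ℝ)+2) ≠ 0 := by positivity
  have hd3 : (2*(m:ℝ)+3) ≠ 0 := by positivity
  have h4 : ((4:ℝ)^m) ≠ 0 := by positivity
  simp only [div_pow]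
  rw [h23]
  push_cast
  field_simp
  ring

end Main2


theorem instability_threshold_2D (L R ℓ D : ℝ) (hL : 0 < L) (hR : 0 < R) (hRL : R ≤ L)
    (hℓ : 0 ≤ ℓ) (hD : 0 < D) :
    letI z : ℝ := π * R / L
    π * (D + (Vhat2C L R ℓ 1 0).re) =
        D * π + R ^ 2 *
          ((π / 2) * (ℓ / R) *
              (besselJ 1 z * struveH 0 z - besselJ 0 z * struveH 1 z) -
            besselJ 2 z) ∧
      (D + (Vhat2C L R ℓ 1 0).re = 0 ↔
        D * π + R ^ 2 *
          ((π / 2) * (ℓ / R) *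
              (besselJ 1 z * struveH 0 z - besselJ 0 z * struveH 1 z) -
            besselJ 2 z) = 0) := by
  set z : ℝ := π * R / L with hzdef
  have hz : 0 < z := by rw [hzdef]; positivity
  have hSB : (∑' m : ℕ, R * ((-1:ℝ)^m / ((4:ℝ)^m * (m.factorial:ℝ)^2 * (2*(m:ℝ)+2)
      * (2*(m:ℝ)+3))) * z^(2*m+2)) = (π/2) * R * (besselJ 1 z * struveH 0 z
        - besselJ 0 z * struveH 1 z) := by
    apply mul_left_cancel₀ hz.ne'
    rw [sumb_eq hL hR]
    have hkey := key_identity z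
    have hπ : (π:ℝ) ≠ 0 := pi_ne_zero
    calc R * Tfun z = (π/2) * (2/π * Tfun z) * R := by field_simp
      _ = (π/2) * (z * (besselJ 1 z * struveH 0 z - besselJ 0 z * struveH 1 z)) * R := by
          rw [hkey]
      _ = z * ((π/2) * R * (besselJ 1 z * struveH 0 z - besselJ 0 z * struveH 1 z)) := by
          ring
  have main : π * (D + (Vhat2C L R ℓ 1 0).re) =
      D * π + R ^ 2 * ((π / 2) * (ℓ / R) *
        (besselJ 1 z * struveH 0 z - besselJ 0 z * struveH 1 z) - besselJ 2 z) := by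
    rw [mul_add, pi_vhat hL hR hRL hℓ, ← hzdef, hSB]
    have hRne : R ≠ 0 := hR.ne'
    field_simp
    ring
  refine ⟨main, ?_⟩
  rw [← main]
  constructor
  · intro h
    rw [h, mul_zero]
  · intro h
    have := mul_eq_zero.mp h
    rcases this with h1 | h2
    · exact absurd h1 pi_ne_zero
    · exact h2
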